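/- Let q = 2^{2t+1} be an odd power of 2 (so that 3 divides q + 1) and let F = 𝔽_{q²}. Then the number of pairs (a,b) ∈ F × F satisfying b^q + b = a³ is exactly 3q² − 2q. -/

import Mathlib

open Polynomial Finset

/-- In a finite field, the number of `n`-th roots of unity is `n` when `n ∣ card F - 1`. -/
lemma aux_card_roots_unity {F : Type} [Field F] [Fintype F] [DecidableEq F]
    (n : ℕ) (hn : 0 < n) (hdvd : n ∣ Fintype.card F - 1) :
    (Finset.univ.filter fun x : F => x ^ n = 1).card = n := by
  classical
  obtain ⟨g, hg⟩ := IsCyclic.exists_monoid_generator (α := Fˣ)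
  have hN : 0 < Fintype.card F - 1 := by
    have := Fintype.one_lt_card (α := F)
    omega
  have hog : orderOf g = Fintype.card F - 1 := by
    rw [orderOf_eq_card_of_forall_mem_zpowers fun y =>
      Subgroup.mem_zpowers_iff.mpr (by
        obtain ⟨k, hk⟩ := hg y; exact ⟨(k : ℤ), by simpa using hk⟩),
      Nat.card_eq_fintype_card, Fintype.card_units]
  set N := Fintype.card F - 1 with hNdef
  have hord : orderOf (g ^ (N / n)) = n := by
    rw [orderOf_pow, hog, Nat.gcd_eq_right (Nat.div_dvd_of_dvd hdvd),
      Nat.div_div_self hdvd hN.ne']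
  have hζ : IsPrimitiveRoot ((g ^ (N / n) : Fˣ) : F) n := by
    rw [IsPrimitiveRoot.coe_units_iff]
    have := IsPrimitiveRoot.orderOf (g ^ (N / n))
    rwa [hord] at this
  have : (Finset.univ.filter fun x : F => x ^ n = 1) = nthRootsFinset n (1 : F) := by
    ext x
    simp [Polynomial.mem_nthRootsFinset hn (1 : F)]
  rw [this, hζ.card_nthRootsFinset]

/-- Let `q = 2^(2t+1)` be an odd power of `2` and `F = 𝔽_{q²}`. Then the number of pairs
`(a,b) ∈ F × F` with `b^q + b = a³` is exactly `3q² − 2q`. -/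
theorem second_curve_point_count (t : ℕ) (q : ℕ) (hq : q = 2 ^ (2 * t + 1))
    (F : Type) [Field F] [Fintype F] (hF : Fintype.card F = q ^ 2) :
    Nat.card {p : F × F // p.2 ^ q + p.2 = p.1 ^ 3} = 3 * q ^ 2 - 2 * q := by
  classical
  have hq2 : 2 ≤ q := by
    rw [hq]
    calc 2 = 2 ^ 1 := (pow_one 2).symm
    _ ≤ 2 ^ (2 * t + 1) := Nat.pow_le_pow_right (by norm_num) (by omega)
  have hq0 : q ≠ 0 := by omega
  -- characteristic 2
  have hchar : CharP F 2 := by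
    obtain ⟨p, hc⟩ := CharP.exists F
    haveI := hc
    haveI hp' : Fact p.Prime := ⟨CharP.char_is_prime F p⟩
    obtain ⟨n, -, hn⟩ := FiniteField.card F p
    have hdvd : p ∣ 2 ^ ((2 * t + 1) * 2) := by
      rw [pow_mul, ← hq, ← hF, hn]
      exact dvd_pow_self p n.2.ne'
    have hp2 : p = 2 :=
      (Nat.prime_dvd_prime_iff_eq hp'.out Nat.prime_two).mp (hp'.out.dvd_of_dvd_pow hdvd)
    rwa [hp2] at hc
  haveI := hchar
  have frob : ∀ x y : F, (x + y) ^ q = x ^ q + y ^ q := by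
    intro x y; rw [hq]; exact add_pow_char_pow x y 2 (2 * t + 1)
  have hpc : ∀ x : F, (x ^ q) ^ q = x := by
    intro x
    rw [← pow_mul, ← sq, ← hF, FiniteField.pow_card]
  have hself : ∀ x : F, x + x = 0 := CharTwo.add_self_eq_zero
  have haddz : ∀ x y : F, x + y = 0 ↔ x = y := by
    intro x y
    constructor
    · intro h
      have := congrArg (· + y) h
      simpa [add_assoc, hself y] using this
    · rintro rfl; exact hself _
  set φ : F → F := fun b => b ^ q + b with hφ
  have hφadd : ∀ x y : F, φ (x + y) = φ x + φ y := by
    intro x y; simp only [hφ, frob]; ring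
  -- the kernel
  set K : Finset F := Finset.univ.filter fun b : F => φ b = 0 with hK
  have hKmem : ∀ b : F, b ∈ K ↔ b ^ q = b := by
    intro b; simp [hK, hφ, haddz]
  -- K.card ≤ q via roots of X^q - X
  have hKle : K.card ≤ q := by
    have h1q : 1 < q := hq2
    have hPne : (X ^ q - X : F[X]) ≠ 0 := FiniteField.X_pow_card_sub_X_ne_zero F h1q
    have hdeg : (X ^ q - X : F[X]).natDegree = q :=
      FiniteField.X_pow_card_sub_X_natDegree_eq F h1q
    have hsub : K ⊆ (X ^ q - X : F[X]).roots.toFinset := by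
      intro b hb
      rw [Multiset.mem_toFinset, mem_roots hPne]
      simp [IsRoot, sub_eq_zero, (hKmem b).mp hb]
    calc K.card ≤ (X ^ q - X : F[X]).roots.toFinset.card := Finset.card_le_card hsub
      _ ≤ Multiset.card (X ^ q - X : F[X]).roots := Multiset.toFinset_card_le _
      _ ≤ (X ^ q - X : F[X]).natDegree := card_roots' _
      _ = q := hdeg
  -- each nonempty fiber of φ has size K.card
  have fiber_eq : ∀ b₀ : F,
      (Finset.univ.filter fun b : F => φ b = φ b₀).card = K.card := by
    intro b₀
    apply Finset.card_bij' (fun b _ => b + b₀) (fun c _ => c + b₀)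
    · intro b hb
      simp only [mem_filter, mem_univ, true_and] at hb ⊢
      rw [hK, mem_filter]
      refine ⟨mem_univ _, ?_⟩
      rw [hφadd, hb, hself]
    · intro c hc
      simp only [hK, mem_filter, mem_univ, true_and] at hc ⊢
      rw [hφadd, hc, zero_add]
    · intro b _; rw [add_assoc, hself, add_zero]
    · intro c _; rw [add_assoc, hself, add_zero]
  -- image of φ
  set Im : Finset F := Finset.univ.image φ with hIm
  have hImK : Im ⊆ K := by
    intro c hc
    obtain ⟨b, -, rfl⟩ := Finset.mem_image.mp hc
    rw [hK, mem_filter]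
    refine ⟨mem_univ _, ?_⟩
    simp only [hφ]
    rw [frob]
    calc (b ^ q) ^ q + b ^ q + (b ^ q + b) = b + (b ^ q + b ^ q) + b := by rw [hpc]; ring
      _ = 0 := by rw [hself, add_zero, hself]
  have hcardprod : Im.card * K.card = q ^ 2 := by
    calc Im.card * K.card = ∑ _c ∈ Im, K.card := by rw [Finset.sum_const, smul_eq_mul]
      _ = ∑ c ∈ Im, (Finset.univ.filter fun b : F => φ b = c).card := by
          refine Finset.sum_congr rfl fun c hc => ?_
          obtain ⟨b₀, -, rfl⟩ := Finset.mem_image.mp hc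
          exact (fiber_eq b₀).symm
      _ = q ^ 2 := by
          rw [← hF, ← Finset.card_univ (α := F)]
          exact (Finset.card_eq_sum_card_image φ Finset.univ).symm
  have hKq : K.card = q := by
    have h1 : q ^ 2 ≤ K.card * K.card :=
      hcardprod ▸ Nat.mul_le_mul_right _ (Finset.card_le_card hImK)
    rw [sq] at h1
    nlinarith [hKle]
  have hImq : Im.card = q := by
    have h := hcardprod
    rw [hKq, sq] at h
    exact Nat.eq_of_mul_eq_mul_right (by omega) h
  have hImeqK : Im = K := Finset.eq_of_subset_of_card_le hImK (by rw [hImq, hKq])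
  -- main count
  rw [Nat.card_eq_fintype_card,
    Fintype.card_congr (Equiv.subtypeProdEquivSigmaSubtype fun a b : F => b ^ q + b = a ^ 3),
    Fintype.card_sigma]
  have hfib : ∀ a : F, Fintype.card {b : F // b ^ q + b = a ^ 3}
      = if (a ^ 3) ^ q = a ^ 3 then q else 0 := by
    intro a
    rw [Fintype.card_subtype]
    split_ifs with h
    · have hIn : (a ^ 3) ∈ Im := by
        rw [hImeqK, hKmem]; exact h
      obtain ⟨b₀, -, hb₀⟩ := Finset.mem_image.mp hIn
      simp only [hφ] at hb₀
      have heq : (Finset.univ.filter fun b : F => b ^ q + b = a ^ 3)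
          = Finset.univ.filter fun b : F => φ b = φ b₀ := by
        refine Finset.filter_congr fun b _ => ?_
        simp only [hφ, hb₀]
      rw [heq, fiber_eq, hKq]
    · rw [Finset.card_eq_zero]
      ext b
      simp only [mem_filter, mem_univ, true_and, Finset.notMem_empty, iff_false]
      intro hb
      apply h
      have hIn : (a ^ 3) ∈ Im := Finset.mem_image.mpr ⟨b, mem_univ _, hb⟩
      have := hImK hIn
      rwa [hKmem] at this
  rw [Finset.sum_congr rfl fun a _ => hfib a]
  -- 3 ∣ q + 1
  have h3 : 3 ∣ q + 1 := by
    have h4 : (4 : ℕ) ^ t ≡ 1 ^ t [MOD 3] := Nat.ModEq.pow t (by decide)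
    have hq4 : q = 4 ^ t * 2 := by
      rw [hq, pow_add, pow_mul]; norm_num
    have h5 : q + 1 ≡ 1 * 2 + 1 [MOD 3] := by
      rw [hq4]
      exact Nat.ModEq.add_right 1 (Nat.ModEq.mul_right 2 (by simpa using h4))
    have := (Nat.modEq_iff_dvd' (by omega)).mp h5.symm
    omega
  -- divisibility 3*(q-1) ∣ card F - 1
  have hdvd : 3 * (q - 1) ∣ Fintype.card F - 1 := by
    rw [hF]
    obtain ⟨m, hm⟩ := h3
    obtain ⟨r, hr⟩ : ∃ r, q = r + 1 := ⟨q - 1, by omega⟩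
    refine ⟨m, ?_⟩
    have e1 : 3 * (q - 1) * m = r * (3 * m) := by
      rw [hr]; simp [Nat.add_sub_cancel]; ring
    have e2 : r * (3 * m) = r * r + 2 * r := by
      rw [← hm, hr]; ring
    have e3 : q ^ 2 = r * r + 2 * r + 1 := by rw [hr]; ring
    rw [e1, e2, e3]
    omega
  -- number of a with (a^3)^q = a^3
  have hiff : ∀ a : F, (a ^ 3) ^ q = a ^ 3 ↔ a = 0 ∨ a ^ (3 * (q - 1)) = 1 := by
    intro a
    rcases eq_or_ne a 0 with rfl | ha
    · simp [zero_pow, hq0]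
    · simp only [ha, false_or]
      rw [← pow_mul]
      have h3q : 3 * q = 3 * (q - 1) + 3 := by omega
      rw [h3q, pow_add]
      constructor
      · intro h
        have h' : a ^ (3 * (q - 1)) * a ^ 3 = 1 * a ^ 3 := by rw [one_mul]; exact h
        exact mul_right_cancel₀ (pow_ne_zero 3 ha) h'
      · intro h; rw [h, one_mul]
  have hsplit : (Finset.univ.filter fun a : F => (a ^ 3) ^ q = a ^ 3).card
      = 1 + 3 * (q - 1) := by
    have hins : (Finset.univ.filter fun a : F => (a ^ 3) ^ q = a ^ 3)
        = insert (0 : F) (Finset.univ.filter fun a : F => a ^ (3 * (q - 1)) = 1) := by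
      ext a
      simp only [mem_filter, mem_univ, true_and, Finset.mem_insert, hiff]
    rw [hins, Finset.card_insert_of_notMem (by
      simp only [mem_filter, mem_univ, true_and]
      rw [zero_pow (by omega : 3 * (q - 1) ≠ 0)]
      exact zero_ne_one),
      aux_card_roots_unity (3 * (q - 1)) (by omega) hdvd]
    omega
  rw [← Finset.sum_filter, Finset.sum_const, smul_eq_mul, hsplit]
  obtain ⟨r, rfl⟩ : ∃ r, q = r + 1 := ⟨q - 1, by omega⟩
  simp only [Nat.add_sub_cancel]
  have e1 : (1 + 3 * r) * (r + 1) = 3 * (r * r) + 4 * r + 1 := by ring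
  have e2 : 3 * (r + 1) ^ 2 = 3 * (r * r) + 6 * r + 3 := by ring
  rw [e1, e2]
  generalize r * r = A
  omega
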